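/- Andreief's identity: for integrable functions f_1,…,f_n and g_1,…,g_n on a measure space (X, μ), (1/n!) ∫_{X^n} det[f_a(x_b)]_{a,b=1}^n · det[g_a(x_b)]_{a,b=1}^n dμ(x_1)⋯dμ(x_n) = det[∫_X f_a(x) g_b(x) dμ(x)]_{a,b=1}^n. -/

import Mathlib

open MeasureTheory

/-- Andreief's identity: for functions `f_1,…,f_n` and `g_1,…,g_n` on a
(σ-finite) measure space `(X, μ)` with all products `f_a g_b` integrable,
`(1/n!) ∫_{X^n} det[f_a(x_b)] det[g_a(x_b)] dμ^n = det[∫ f_a g_b dμ]`. -/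
theorem andreief_identity {X : Type*} [MeasurableSpace X] (μ : Measure X)
    [SigmaFinite μ] (n : ℕ) (f g : Fin n → X → ℂ)
    (hf : ∀ a, Measurable (f a)) (hg : ∀ a, Measurable (g a))
    (hint : ∀ a b, Integrable (fun x => f a x * g b x) μ) :
    (1 / (n.factorial : ℂ)) *
        ∫ x : Fin n → X,
          (Matrix.det (Matrix.of fun a b => f a (x b))) *
            (Matrix.det (Matrix.of fun a b => g a (x b)))
          ∂(Measure.pi fun _ => μ) =
      Matrix.det (Matrix.of fun a b => ∫ x, f a x * g b x ∂μ) := by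
  letI : MeasureSpace X := ⟨μ⟩
  have hpi : (Measure.pi fun _ : Fin n => μ) = (volume : Measure (Fin n → X)) := rfl
  set A : Matrix (Fin n) (Fin n) ℂ := Matrix.of fun a b => ∫ x, f a x * g b x ∂μ with hA
  -- expand the product of determinants pointwise
  have step1 : ∀ x : Fin n → X,
      (Matrix.det (Matrix.of fun a b => f a (x b))) *
        (Matrix.det (Matrix.of fun a b => g a (x b)))
      = ∑ σ : Equiv.Perm (Fin n), ∑ τ : Equiv.Perm (Fin n),
          (((Equiv.Perm.sign σ : ℤ) : ℂ) * ((Equiv.Perm.sign τ : ℤ) : ℂ)) *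
            ∏ b, (f (σ b) (x b) * g (τ b) (x b)) := by
    intro x
    rw [Matrix.det_apply, Matrix.det_apply, Finset.sum_mul_sum]
    refine Finset.sum_congr rfl fun σ _ => Finset.sum_congr rfl fun τ _ => ?_
    simp only [Matrix.of_apply, Units.smul_def, zsmul_eq_mul, Finset.prod_mul_distrib]
    ring
  -- integrability of each term
  have hterm : ∀ σ τ : Equiv.Perm (Fin n),
      Integrable (fun x : Fin n → X =>
        (((Equiv.Perm.sign σ : ℤ) : ℂ) * ((Equiv.Perm.sign τ : ℤ) : ℂ)) *
          ∏ b, (f (σ b) (x b) * g (τ b) (x b))) (Measure.pi fun _ => μ) := by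
    intro σ τ
    rw [hpi]
    exact (Integrable.fintype_prod (f := fun b x => f (σ b) x * g (τ b) x)
      (fun b => hint (σ b) (τ b))).const_mul _
  -- compute the integral
  have key : (∫ x : Fin n → X,
      (Matrix.det (Matrix.of fun a b => f a (x b))) *
        (Matrix.det (Matrix.of fun a b => g a (x b)))
      ∂(Measure.pi fun _ => μ))
      = ∑ σ : Equiv.Perm (Fin n), ∑ τ : Equiv.Perm (Fin n),
          (((Equiv.Perm.sign σ : ℤ) : ℂ) * ((Equiv.Perm.sign τ : ℤ) : ℂ)) *
            ∏ b, A (σ b) (τ b) := by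
    simp_rw [step1]
    rw [integral_finset_sum _ (fun σ _ => integrable_finset_sum _ (fun τ _ => hterm σ τ))]
    refine Finset.sum_congr rfl fun σ _ => ?_
    rw [integral_finset_sum _ (fun τ _ => hterm σ τ)]
    refine Finset.sum_congr rfl fun τ _ => ?_
    rw [hpi, integral_const_mul,
      integral_fintype_prod_volume_eq_prod (fun b x => f (σ b) x * g (τ b) x)]
    rfl
  -- combinatorial identity
  have comb : (∑ σ : Equiv.Perm (Fin n), ∑ τ : Equiv.Perm (Fin n),
      (((Equiv.Perm.sign σ : ℤ) : ℂ) * ((Equiv.Perm.sign τ : ℤ) : ℂ)) *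
        ∏ b, A (σ b) (τ b)) = (n.factorial : ℂ) * A.det := by
    have h1 : ∀ σ : Equiv.Perm (Fin n),
        (∑ τ : Equiv.Perm (Fin n),
          (((Equiv.Perm.sign σ : ℤ) : ℂ) * ((Equiv.Perm.sign τ : ℤ) : ℂ)) *
            ∏ b, A (σ b) (τ b)) = A.det := by
      intro σ
      rw [← Equiv.sum_comp (Equiv.mulRight σ)
        (fun τ => (((Equiv.Perm.sign σ : ℤ) : ℂ) * ((Equiv.Perm.sign τ : ℤ) : ℂ)) *
          ∏ b, A (σ b) (τ b))]
      have hsq : (((Equiv.Perm.sign σ : ℤ) : ℂ) * ((Equiv.Perm.sign σ : ℤ) : ℂ)) = 1 := by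
        rcases Int.units_eq_one_or (Equiv.Perm.sign σ) with h | h <;> simp [h]
      have hdet : A.det = ∑ ρ : Equiv.Perm (Fin n),
          ((Equiv.Perm.sign ρ : ℤ) : ℂ) * ∏ c, A c (ρ c) := by
        conv_lhs => rw [← Matrix.det_transpose, Matrix.det_apply]
        refine Finset.sum_congr rfl fun ρ _ => ?_
        simp [Matrix.transpose_apply, Units.smul_def, zsmul_eq_mul]
      rw [hdet]
      refine Finset.sum_congr rfl fun ρ _ => ?_
      have hprod : (∏ b, A (σ b) ((Equiv.mulRight σ ρ) b)) = ∏ c, A c (ρ c) := by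
        have := Equiv.prod_comp σ (fun c => A c (ρ c))
        simpa [Equiv.Perm.mul_apply] using this
      have hsign : ((Equiv.Perm.sign (Equiv.mulRight σ ρ) : ℤ) : ℂ)
          = ((Equiv.Perm.sign ρ : ℤ) : ℂ) * ((Equiv.Perm.sign σ : ℤ) : ℂ) := by
        have : Equiv.Perm.sign (ρ * σ) = Equiv.Perm.sign ρ * Equiv.Perm.sign σ := map_mul _ _ _
        simp only [Equiv.coe_mulRight] at *
        rw [this]
        push_cast
        ring
      rw [hprod, hsign]
      calc ((Equiv.Perm.sign σ : ℤ) : ℂ) *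
            (((Equiv.Perm.sign ρ : ℤ) : ℂ) * ((Equiv.Perm.sign σ : ℤ) : ℂ)) * ∏ c, A c (ρ c)
          = (((Equiv.Perm.sign σ : ℤ) : ℂ) * ((Equiv.Perm.sign σ : ℤ) : ℂ)) *
            (((Equiv.Perm.sign ρ : ℤ) : ℂ) * ∏ c, A c (ρ c)) := by ring
        _ = ((Equiv.Perm.sign ρ : ℤ) : ℂ) * ∏ c, A c (ρ c) := by rw [hsq, one_mul]
    simp_rw [h1]
    rw [Finset.sum_const, Finset.card_univ, Fintype.card_perm, Fintype.card_fin,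
      nsmul_eq_mul]
  rw [key, comb, one_div, inv_mul_cancel_left₀]
  exact_mod_cast Nat.cast_ne_zero.mpr n.factorial_ne_zero
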